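/- Let α and β be nonempty finite types, let p be a probability vector on α, let C : α → β, let q be the pushforward of p along C, and define U : α → ℝ by U(a) = q(C(a)) / |{a' : C(a') = C(a)}| (the fiber of C(a) is nonempty since it contains a). Then the Shannon entropy of p is bounded above by the Shannon entropy of U: H(p) ≤ H(U). -/
import Mathlib

open Finset

/-- Shannon entropy of a finitely supported distribution, `H(p) = ∑ a, -p a * log (p a)`,
with the convention `0 * log 0 = 0` via `Real.negMulLog`. -/
noncomputable def entropy {α : Type*} [Fintype α] (p : α → ℝ) : ℝ :=
  ∑ a, Real.negMulLog (p a)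

/-- Pushforward of `p : α → ℝ` along `C : α → β`: `q x = ∑_{a : C a = x} p a`. -/
noncomputable def pushforward {α β : Type*} [Fintype α] [DecidableEq β]
    (p : α → ℝ) (C : α → β) (x : β) : ℝ :=
  ∑ a ∈ Finset.univ.filter (fun a => C a = x), p a

lemma jensen_fiber {α : Type*} (S : Finset α) (hS : S.Nonempty) (p : α → ℝ)
    (hp : ∀ a ∈ S, 0 ≤ p a) :
    ∑ a ∈ S, Real.negMulLog (p a) ≤
      S.card * Real.negMulLog ((∑ a ∈ S, p a) / S.card) := by
  have hcard : (0 : ℝ) < S.card := by exact_mod_cast Finset.card_pos.2 hS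
  have h := Real.concaveOn_negMulLog.le_map_sum (t := S) (w := fun _ => (S.card : ℝ)⁻¹)
    (p := p) (fun i _ => by positivity)
    (by rw [Finset.sum_const, nsmul_eq_mul, mul_inv_cancel₀ hcard.ne'])
    (fun i hi => hp i hi)
  simp only [smul_eq_mul, ← Finset.mul_sum] at h
  rw [div_eq_inv_mul]
  calc ∑ a ∈ S, Real.negMulLog (p a)
      = S.card * ∑ a ∈ S, (S.card : ℝ)⁻¹ * Real.negMulLog (p a) := by
        rw [← Finset.mul_sum, ← mul_assoc, mul_inv_cancel₀ hcard.ne', one_mul]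
    _ ≤ S.card * Real.negMulLog ((S.card : ℝ)⁻¹ * ∑ a ∈ S, p a) := by
        apply mul_le_mul_of_nonneg_left _ hcard.le
        simpa [Finset.mul_sum] using h

/-- Theorem 1: the entropy of `p` is bounded above by the entropy of the distribution `U`
that places on each `a` the pushforward mass of its fiber divided by the fiber size. -/
theorem entropy_le_entropy_uniform_mixture
    {α β : Type*} [Fintype α] [Fintype β] [Nonempty α] [Nonempty β] [DecidableEq β]
    (p : α → ℝ) (hp : ∀ a, 0 ≤ p a) (hsum : ∑ a, p a = 1) (C : α → β)
    (U : α → ℝ)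
    (hU : ∀ a, U a =
      pushforward p C (C a) / (Finset.univ.filter (fun a' => C a' = C a)).card) :
    entropy p ≤ entropy U := by
  classical
  have key : ∀ f : α → ℝ, ∑ a, f a = ∑ x : β, ∑ a ∈ Finset.univ.filter (fun a => C a = x), f a := by
    intro f
    rw [Finset.sum_fiberwise_of_maps_to (fun a _ => Finset.mem_univ (C a))]
  rw [entropy, entropy, key (fun a => Real.negMulLog (p a)),
    key (fun a => Real.negMulLog (U a))]
  apply Finset.sum_le_sum
  intro x _
  rcases (Finset.univ.filter (fun a => C a = x)).eq_empty_or_nonempty with he | hne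
  · simp [he]
  · set S := Finset.univ.filter (fun a => C a = x) with hSdef
    have hUa : ∀ a ∈ S, U a = (∑ b ∈ S, p b) / S.card := by
      intro a ha
      have hCa : C a = x := (Finset.mem_filter.1 ha).2
      rw [hU a, pushforward, hCa]
    calc ∑ a ∈ S, Real.negMulLog (p a)
        ≤ S.card * Real.negMulLog ((∑ a ∈ S, p a) / S.card) :=
          jensen_fiber S hne p (fun a _ => hp a)
      _ = ∑ a ∈ S, Real.negMulLog (U a) := by
          have h2 : ∀ a ∈ S, Real.negMulLog (U a)
              = Real.negMulLog ((∑ b ∈ S, p b) / S.card) :=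
            fun a ha => by rw [hUa a ha]
          rw [Finset.sum_congr rfl h2, Finset.sum_const, nsmul_eq_mul]
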